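/- arXiv:0806.2724 — 5 statements merged into one kernel-verified Lean document; each statement's English description precedes it below -/
import Mathlib

section
/- If a series ∑_k a_k of real numbers converges, then the series ∑_k a_k/k converges and moreover n·∑_{k≥n} a_k/k → 0 as n → ∞. -/
open Filter Topology Finset

private lemma abel_tele (n : ℕ) (hn : 1 ≤ n) :
    ∀ N, n ≤ N → ∑ k ∈ Finset.Icc n N, ((1:ℝ)/k - 1/(k+1)) = 1/n - 1/(N+1) := by
  intro N hN
  induction N, hN using Nat.le_induction with
  | base => simp
  | succ N hN ih =>
      rw [Finset.sum_Icc_succ_top (by omega : n ≤ N + 1), ih]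
      push_cast
      ring

private lemma abel_ident (a r : ℕ → ℝ) (ha : ∀ k, 1 ≤ k → a k = r k - r (k + 1))
    (n : ℕ) (hn : 1 ≤ n) :
    ∀ N, n ≤ N → ∑ k ∈ Finset.Icc n N, a k / k =
      r n / n - r (N + 1) / N +
        ∑ k ∈ Finset.Icc n (N - 1), r (k + 1) * (1 / (k + 1) - 1 / k) := by
  intro N hN
  induction N, hN using Nat.le_induction with
  | base =>
      have hempty : Finset.Icc n (n - 1) = ∅ := Finset.Icc_eq_empty (by omega)
      rw [hempty, Finset.sum_empty, Finset.Icc_self, Finset.sum_singleton,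
        ha n hn, sub_div, add_zero]
  | succ N hN ih =>
      have hN1 : 1 ≤ N := le_trans hn hN
      have h1 : (N : ℝ) ≠ 0 := by positivity
      have h2 : ((N : ℝ) + 1) ≠ 0 := by positivity
      rw [Finset.sum_Icc_succ_top (by omega : n ≤ N + 1), ih]
      have hsucc : N + 1 - 1 = (N - 1) + 1 := by omega
      rw [hsucc, Finset.sum_Icc_succ_top (by omega : n ≤ (N - 1) + 1)]
      have hN' : ((N : ℕ) - 1 + 1 : ℕ) = N := by omega
      rw [hN']
      rw [ha (N + 1) (by omega)]
      push_cast
      field_simp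
      ring

private lemma abel_bnd (a r : ℕ → ℝ) (ha : ∀ k, 1 ≤ k → a k = r k - r (k + 1))
    (ε : ℝ) (hε : 0 ≤ ε) (n : ℕ) (hn : 1 ≤ n) (hr : ∀ k, n ≤ k → |r k| ≤ ε) :
    ∀ N, n ≤ N → |∑ k ∈ Finset.Icc n N, a k / k| ≤ 3 * ε / n := by
  intro N hN
  have hn0 : (0:ℝ) < n := by exact_mod_cast hn
  have hN0 : (0:ℝ) < N := by exact_mod_cast lt_of_lt_of_le (by omega : 0 < n) hN
  rw [abel_ident a r ha n hn N hN]
  have h1 : |r n / n| ≤ ε / n := by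
    rw [abs_div, abs_of_pos hn0]
    gcongr
    exact hr n le_rfl
  have h2 : |r (N + 1) / N| ≤ ε / n := by
    rw [abs_div, abs_of_pos hN0]
    gcongr
    all_goals first
      | exact hr (N + 1) (by omega)
      | exact_mod_cast hN
  have h3 : |∑ k ∈ Finset.Icc n (N - 1), r (k + 1) * (1 / (k + 1) - 1 / k)| ≤ ε / n := by
    by_cases hNn : N = n
    · have hempty : Finset.Icc n (N - 1) = ∅ := Finset.Icc_eq_empty (by omega)
      rw [hempty, Finset.sum_empty, abs_zero]
      positivity
    · have hle : n ≤ N - 1 := by omega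
      calc |∑ k ∈ Finset.Icc n (N - 1), r (k + 1) * (1 / (k + 1) - 1 / k)|
          ≤ ∑ k ∈ Finset.Icc n (N - 1), |r (k + 1) * (1 / (k + 1) - 1 / k)| :=
            Finset.abs_sum_le_sum_abs _ _
        _ ≤ ∑ k ∈ Finset.Icc n (N - 1), ε * ((1:ℝ) / k - 1 / (k + 1)) := by
            apply Finset.sum_le_sum
            intro k hk
            have hkn : n ≤ k := (Finset.mem_Icc.mp hk).1
            have hk1 : 1 ≤ k := le_trans hn hkn
            have hk0 : (0:ℝ) < k := by exact_mod_cast hk1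
            have hsub : (1:ℝ) / (k + 1) - 1 / k ≤ 0 := by
              rw [sub_nonpos]
              gcongr
              all_goals linarith
            rw [abs_mul, abs_of_nonpos hsub, neg_sub]
            apply mul_le_mul (hr (k + 1) (by omega)) le_rfl _ hε
            have : (1:ℝ) / (k + 1) ≤ 1 / k := by gcongr; linarith
            linarith
        _ = ε * ∑ k ∈ Finset.Icc n (N - 1), ((1:ℝ) / k - 1 / (k + 1)) := by
            rw [Finset.mul_sum]
        _ = ε * (1 / n - 1 / ((N - 1 : ℕ) + 1)) := by
            rw [abel_tele n hn (N - 1) hle]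
        _ ≤ ε * (1 / n) := by
            apply mul_le_mul_of_nonneg_left _ hε
            have : (0:ℝ) ≤ 1 / ((N - 1 : ℕ) + 1) := by positivity
            linarith
        _ = ε / n := by ring
  calc |r n / n - r (N + 1) / N +
        ∑ k ∈ Finset.Icc n (N - 1), r (k + 1) * (1 / (k + 1) - 1 / k)|
      ≤ |r n / n - r (N + 1) / N| +
        |∑ k ∈ Finset.Icc n (N - 1), r (k + 1) * (1 / (k + 1) - 1 / k)| := abs_add_le _ _
    _ ≤ (|r n / n| + |r (N + 1) / N|) +
        |∑ k ∈ Finset.Icc n (N - 1), r (k + 1) * (1 / (k + 1) - 1 / k)| := by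
        gcongr
        exact abs_sub _ _
    _ ≤ ε / n + ε / n + ε / n := by gcongr
    _ = 3 * ε / n := by ring

theorem abel_tail (a : ℕ → ℝ) (l : ℝ)
    (hconv : Tendsto (fun n => ∑ k ∈ Finset.Icc 1 n, a k) atTop (𝓝 l)) :
    ∃ S : ℕ → ℝ,
      (∀ n, Tendsto (fun N => ∑ k ∈ Finset.Icc n N, a k / k) atTop (𝓝 (S n))) ∧
      Tendsto (fun n : ℕ => (n : ℝ) * S n) atTop (𝓝 0) := by
  set r : ℕ → ℝ := fun n => l - ∑ k ∈ Finset.Icc 1 (n - 1), a k with hr_def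
  have ha : ∀ k, 1 ≤ k → a k = r k - r (k + 1) := by
    intro k hk
    obtain ⟨m, rfl⟩ : ∃ m, k = m + 1 := ⟨k - 1, by omega⟩
    simp only [hr_def, Nat.add_sub_cancel]
    rw [Finset.sum_Icc_succ_top (by omega : 1 ≤ m + 1)]
    ring
  have hr0 : Tendsto r atTop (𝓝 0) := by
    have h1 : Tendsto (fun n : ℕ => ∑ k ∈ Finset.Icc 1 (n - 1), a k) atTop (𝓝 l) :=
      hconv.comp (tendsto_sub_atTop_nat 1)
    have h2 := Tendsto.sub (tendsto_const_nhds (x := l)) h1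
    simpa using h2
  -- convergence of the tail series for n ≥ 1
  have hex : ∀ n : ℕ, 1 ≤ n →
      ∃ s : ℝ, Tendsto (fun N => ∑ k ∈ Finset.Icc n N, a k / k) atTop (𝓝 s) := by
    intro n hn
    apply cauchySeq_tendsto_of_complete
    rw [Metric.cauchySeq_iff']
    intro ε hε
    obtain ⟨K0, hK0⟩ := (Metric.tendsto_atTop.mp hr0) (ε / 4) (by linarith)
    refine ⟨max n K0, fun m hm => ?_⟩
    set K := max n K0 with hK
    have hnK : n ≤ K := le_max_left _ _
    have hsplit : ∀ M, K ≤ M →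
        ∑ k ∈ Finset.Icc n M, a k / k
          = ∑ k ∈ Finset.Icc n K, a k / k + ∑ k ∈ Finset.Ioc K M, a k / k := by
      intro M hM
      have e1 : Finset.Icc n M = Finset.Ioc (n - 1) M := by
        rw [← Finset.Icc_add_one_left_eq_Ioc]; congr 1; omega
      have e2 : Finset.Icc n K = Finset.Ioc (n - 1) K := by
        rw [← Finset.Icc_add_one_left_eq_Ioc]; congr 1; omega
      rw [e1, e2, Finset.sum_Ioc_consecutive _ (by omega : n - 1 ≤ K) hM]
    rcases eq_or_lt_of_le hm with h | h
    · simp [← h, hε]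
    · rw [Real.dist_eq, hsplit m (le_of_lt h), add_sub_cancel_left]
      have e3 : Finset.Ioc K m = Finset.Icc (K + 1) m := (Finset.Icc_add_one_left_eq_Ioc _ _).symm
      rw [e3]
      have hb : |∑ k ∈ Finset.Icc (K + 1) m, a k / k| ≤ 3 * (ε / 4) / ((K:ℕ) + 1 : ℕ) := by
        apply abel_bnd a r ha (ε / 4) (by linarith) (K + 1) (by omega)
          (fun k hk => le_of_lt (by
            have := hK0 k (le_trans (le_trans (le_max_right n K0) (by omega)) hk)
            rwa [Real.dist_eq, sub_zero] at this)) m (by omega)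
      have hK1 : (1:ℝ) ≤ (K:ℝ) + 1 := by
        have : (0:ℝ) ≤ (K:ℝ) := Nat.cast_nonneg _
        linarith
      rw [(by push_cast; ring : (((K:ℕ) + 1 : ℕ) : ℝ) = (K:ℝ) + 1)] at hb
      calc |∑ k ∈ Finset.Icc (K + 1) m, a k / k| ≤ 3 * (ε / 4) / ((K:ℝ) + 1) := hb
        _ ≤ 3 * (ε / 4) / 1 := by gcongr
        _ < ε := by linarith
  choose S0 hS0 using fun n => hex (n + 1) (by omega)
  set S : ℕ → ℝ := fun n => if n = 0 then S0 0 else S0 (n - 1) with hS_def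
  have hS : ∀ n, Tendsto (fun N => ∑ k ∈ Finset.Icc n N, a k / k) atTop (𝓝 (S n)) := by
    intro n
    rcases Nat.eq_zero_or_pos n with rfl | hn
    · have heq : (fun N => ∑ k ∈ Finset.Icc 0 N, a k / k)
          = fun N => ∑ k ∈ Finset.Icc 1 N, a k / k := by
        funext N
        have : Finset.Icc 0 N = insert 0 (Finset.Icc 1 N) := by
          ext x; simp [Finset.mem_Icc, Finset.mem_insert]; omega
        rw [this, Finset.sum_insert (by simp)]
        norm_num
      rw [heq]
      simpa [hS_def] using hS0 0
    · have : S n = S0 (n - 1) := by simp [hS_def, Nat.pos_iff_ne_zero.mp hn]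
      rw [this]
      have := hS0 (n - 1)
      rwa [(by omega : n - 1 + 1 = n)] at this
  refine ⟨S, hS, ?_⟩
  rw [Metric.tendsto_atTop]
  intro ε hε
  obtain ⟨K0, hK0⟩ := (Metric.tendsto_atTop.mp hr0) (ε / 6) (by linarith)
  refine ⟨max K0 1, fun n hn => ?_⟩
  have hn1 : 1 ≤ n := le_trans (le_max_right _ _) hn
  have hn0 : (0:ℝ) < n := by exact_mod_cast hn1
  have hSb : |S n| ≤ 3 * (ε / 6) / n := by
    apply le_of_tendsto (hS n).abs
    filter_upwards [eventually_ge_atTop n] with N hN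
    exact abel_bnd a r ha (ε / 6) (by linarith) n hn1
      (fun k hk => le_of_lt (by
        have := hK0 k (le_trans (le_trans (le_max_left K0 1) hn) hk)
        rwa [Real.dist_eq, sub_zero] at this)) N hN
  rw [Real.dist_eq, sub_zero, abs_mul, abs_of_pos hn0]
  calc (n:ℝ) * |S n| ≤ (n:ℝ) * (3 * (ε / 6) / n) := by gcongr
    _ = ε / 2 := by field_simp; ring
    _ < ε := by linarith
end

section
/- Let (ρ_k)_{k≥1} be independent identically distributed real random variables with E[ρ_1^4] < ∞ and set β = E[ρ_1^2]. Then n·∑_{k≥n} k^{-2}·ρ_k^2 converges almost surely to β as n → ∞. -/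
open Filter Topology MeasureTheory ProbabilityTheory Finset

lemma sum_Ico_telescope (f : ℕ → ℝ) (n : ℕ) : ∀ N, n ≤ N →
    ∑ j ∈ Finset.Ico n N, (f j - f (j+1)) = f n - f N := by
  intro N hN
  induction N, hN using Nat.le_induction with
  | base => simp
  | succ N hN ih => rw [Finset.sum_Ico_succ_top hN, ih]; ring

lemma hasSum_telescope (f : ℕ → ℝ) (n : ℕ) (hf : Tendsto f atTop (𝓝 0))
    (hmono : ∀ j, n ≤ j → f (j+1) ≤ f j) :
    HasSum (fun j => if n ≤ j then f j - f (j+1) else 0) (f n) := by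
  rw [hasSum_iff_tendsto_nat_of_nonneg]
  · have h1 : ∀ N, n ≤ N → ∑ j ∈ Finset.range N, (if n ≤ j then f j - f (j+1) else 0)
        = f n - f N := by
      intro N hN
      rw [Finset.range_eq_Ico, ← Finset.sum_Ico_consecutive _ (Nat.zero_le n) hN,
        Finset.sum_eq_zero (fun j hj => by simp [Nat.not_le.mpr (Finset.mem_Ico.mp hj).2]),
        zero_add, Finset.sum_congr rfl (fun j hj => if_pos (Finset.mem_Ico.mp hj).1),
        sum_Ico_telescope f n N hN]
    have h2 : Tendsto (fun N => f n - f N) atTop (𝓝 (f n)) := by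
      simpa using tendsto_const_nhds.sub hf
    refine h2.congr' ?_
    filter_upwards [eventually_ge_atTop n] with N hN using (h1 N hN).symm
  · intro j
    by_cases h : n ≤ j <;> simp [h, sub_nonneg]
    exact hmono j h

noncomputable def cc (j : ℕ) : ℝ := 1/(j:ℝ)^2 - 1/((j:ℝ)+1)^2

lemma cc_nonneg {j : ℕ} (hj : 1 ≤ j) : 0 ≤ cc j := by
  have : (1:ℝ) ≤ (j:ℝ) := by exact_mod_cast hj
  have h0 : (0:ℝ) < (j:ℝ) := by linarith
  have h1 : (0:ℝ) < (j:ℝ)+1 := by linarith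
  have : 1/((j:ℝ)+1)^2 ≤ 1/(j:ℝ)^2 := by
    apply one_div_le_one_div_of_le (by positivity)
    nlinarith
  simp only [cc]; linarith

lemma cc_mul_eq {j : ℕ} (hj : 1 ≤ j) :
    cc j * ((j:ℝ)+1) = (1/(j:ℝ) - 1/((j:ℝ)+1)) + 1/(j:ℝ)^2 := by
  have : (1:ℝ) ≤ (j:ℝ) := by exact_mod_cast hj
  have h0 : (j:ℝ) ≠ 0 := by linarith
  have h1 : (j:ℝ)+1 ≠ 0 := by linarith
  simp only [cc]
  field_simp
  ring

lemma cc_mul_le {j : ℕ} (hj : 1 ≤ j) : cc j * ((j:ℝ)+1) ≤ 3/(j:ℝ)^2 := by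
  have : (1:ℝ) ≤ (j:ℝ) := by exact_mod_cast hj
  rw [cc_mul_eq hj]
  have h2 : 1/(j:ℝ) - 1/((j:ℝ)+1) ≤ 1/(j:ℝ)^2 := by
    rw [div_sub_div _ _ (by linarith) (by linarith)]
    rw [div_le_div_iff₀ (by nlinarith) (by nlinarith)]
    ring_nf
    nlinarith
  have h3 : (3:ℝ)/(j:ℝ)^2 = 1/(j:ℝ)^2 + 1/(j:ℝ)^2 + 1/(j:ℝ)^2 := by ring
  have hpos : (0:ℝ) ≤ 1/(j:ℝ)^2 := by positivity
  linarith

lemma summable_one_div_sq : Summable (fun j : ℕ => 1/(j:ℝ)^2) := by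
  simpa using Real.summable_one_div_nat_pow.mpr (by norm_num : 1 < 2)

lemma summable_ite_of_le {f g : ℕ → ℝ} (n : ℕ) (hg : Summable g)
    (h0 : ∀ j, n ≤ j → 0 ≤ f j) (hle : ∀ j, n ≤ j → f j ≤ g j) :
    Summable (fun j => if n ≤ j then f j else 0) := by
  refine Summable.of_nonneg_of_le (f := fun j => {j | n ≤ j}.indicator g j)
    (fun j => ?_) (fun j => ?_) (hg.indicator {j | n ≤ j})
  · by_cases h : n ≤ j <;> simp [h]
    exact h0 j h
  · by_cases h : n ≤ j
    · simpa [Set.indicator, h] using hle j h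
    · simp [Set.indicator, h]

noncomputable def PP (n : ℕ) : ℝ := ∑' j : ℕ, if n ≤ j then 1/(j:ℝ)^2 else 0

lemma summable_tail_sq (n : ℕ) : Summable (fun j => if n ≤ j then 1/(j:ℝ)^2 else 0) :=
  summable_ite_of_le n summable_one_div_sq (fun j _ => by positivity) (fun j _ => le_rfl)

lemma hasSum_PP (n : ℕ) : HasSum (fun j => if n ≤ j then 1/(j:ℝ)^2 else 0) (PP n) :=
  (summable_tail_sq n).hasSum

lemma hasSum_tele_low (n : ℕ) (hn : 1 ≤ n) :
    HasSum (fun j => if n ≤ j then 1/(j:ℝ) - 1/((j:ℝ)+1) else 0) (1/(n:ℝ)) := by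
  have h := hasSum_telescope (fun j => 1/(j:ℝ)) n
    (by simpa using tendsto_one_div_atTop_nhds_zero_nat (𝕜 := ℝ))
    (fun j hj => by
      have : (1:ℝ) ≤ (j:ℝ) := by exact_mod_cast le_trans hn hj
      apply one_div_le_one_div_of_le (by linarith)
      push_cast; linarith)
  convert h using 2 with j
  push_cast
  rfl

lemma hasSum_tele_high (n : ℕ) (hn : 2 ≤ n) :
    HasSum (fun j => if n ≤ j then 1/((j:ℝ)-1) - 1/(j:ℝ) else 0) (1/((n:ℝ)-1)) := by
  have h := hasSum_telescope (fun j => 1/((j:ℝ)-1)) n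
    (by
      simp only [one_div]
      refine Tendsto.comp tendsto_inv_atTop_zero ?_
      have := tendsto_atTop_add_const_right atTop (-1:ℝ) tendsto_natCast_atTop_atTop
      simpa [sub_eq_add_neg] using this)
    (fun j hj => by
      have : (2:ℝ) ≤ (j:ℝ) := by exact_mod_cast le_trans hn hj
      apply one_div_le_one_div_of_le (by linarith)
      push_cast; linarith)
  convert h using 2 with j
  push_cast
  ring_nf

lemma PP_lower {n : ℕ} (hn : 1 ≤ n) : 1/(n:ℝ) ≤ PP n := by
  refine hasSum_le (fun j => ?_) (hasSum_tele_low n hn) (hasSum_PP n)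
  by_cases h : n ≤ j
  · simp only [if_pos h]
    have hj : (1:ℝ) ≤ (j:ℝ) := by exact_mod_cast le_trans hn h
    rw [div_sub_div _ _ (by linarith) (by linarith), div_le_div_iff₀ (by nlinarith) (by nlinarith)]
    nlinarith
  · simp [h]

lemma PP_upper {n : ℕ} (hn : 2 ≤ n) : PP n ≤ 1/((n:ℝ)-1) := by
  refine hasSum_le (fun j => ?_) (hasSum_PP n) (hasSum_tele_high n hn)
  by_cases h : n ≤ j
  · simp only [if_pos h]
    have hj : (2:ℝ) ≤ (j:ℝ) := by exact_mod_cast le_trans hn h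
    rw [div_sub_div _ _ (by linarith) (by linarith), div_le_div_iff₀ (by nlinarith) (by nlinarith)]
    nlinarith
  · simp [h]

lemma tendsto_nPP : Tendsto (fun n : ℕ => (n:ℝ) * PP n) atTop (𝓝 1) := by
  have hup : Tendsto (fun n : ℕ => (n:ℝ)/((n:ℝ)-1)) atTop (𝓝 1) := by
    have h1 : Tendsto (fun n : ℕ => 1 + 1/((n:ℝ)-1)) atTop (𝓝 1) := by
      have h2 : Tendsto (fun n : ℕ => (n:ℝ)-1) atTop atTop := by
        have := tendsto_atTop_add_const_right atTop (-1:ℝ) tendsto_natCast_atTop_atTop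
        simpa [sub_eq_add_neg] using this
      have := h2.inv_tendsto_atTop
      simpa [one_div] using tendsto_const_nhds.add this
    refine h1.congr' ?_
    filter_upwards [eventually_ge_atTop 2] with n hn
    have h2 : (2:ℝ) ≤ (n:ℝ) := by exact_mod_cast hn
    have hne : (n:ℝ)-1 ≠ 0 := by linarith
    field_simp
    ring
  refine tendsto_of_tendsto_of_tendsto_of_le_of_le' tendsto_const_nhds hup ?_ ?_
  · filter_upwards [eventually_ge_atTop 1] with n hn
    have h0 : (0:ℝ) < (n:ℝ) := by exact_mod_cast hn
    have := PP_lower hn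
    calc (1:ℝ) = (n:ℝ) * (1/(n:ℝ)) := by field_simp
    _ ≤ (n:ℝ) * PP n := by exact mul_le_mul_of_nonneg_left this (le_of_lt h0)
  · filter_upwards [eventually_ge_atTop 2] with n hn
    have h0 : (0:ℝ) < (n:ℝ) := by positivity
    calc (n:ℝ) * PP n ≤ (n:ℝ) * (1/((n:ℝ)-1)) :=
        mul_le_mul_of_nonneg_left (PP_upper hn) (le_of_lt h0)
    _ = (n:ℝ)/((n:ℝ)-1) := by ring

lemma sum_range_ite (f : ℕ → ℝ) (n : ℕ) {N : ℕ} (hN : n ≤ N) :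
    ∑ j ∈ Finset.range N, (if n ≤ j then f j else 0) = ∑ j ∈ Finset.Ico n N, f j := by
  rw [Finset.range_eq_Ico, ← Finset.sum_Ico_consecutive _ (Nat.zero_le n) hN,
    Finset.sum_eq_zero (fun j hj => by simp [Nat.not_le.mpr (Finset.mem_Ico.mp hj).2]),
    zero_add]
  exact Finset.sum_congr rfl (fun j hj => if_pos (Finset.mem_Ico.mp hj).1)

lemma hasSum_QQ (n : ℕ) (hn : 1 ≤ n) :
    HasSum (fun j => if n ≤ j then cc j * ((j:ℝ)+1) else 0) (1/(n:ℝ) + PP n) := by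
  have h := (hasSum_tele_low n hn).add (hasSum_PP n)
  refine HasSum.congr_fun h (fun j => ?_)
  by_cases hj : n ≤ j
  · simp only [if_pos hj]
    exact cc_mul_eq (le_trans hn hj)
  · simp [hj]

noncomputable def QQ (n : ℕ) : ℝ := 1/(n:ℝ) + PP n

lemma tendsto_nQQ : Tendsto (fun n : ℕ => (n:ℝ) * QQ n) atTop (𝓝 2) := by
  have h : Tendsto (fun n : ℕ => 1 + (n:ℝ) * PP n) atTop (𝓝 2) := by
    have h2 := ((tendsto_const_nhds : Tendsto (fun _ : ℕ => (1:ℝ)) atTop (𝓝 1))).add tendsto_nPP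
    norm_num at h2 ⊢
    exact h2
  refine h.congr' ?_
  filter_upwards [eventually_ge_atTop 1] with n hn
  have h0 : (n:ℝ) ≠ 0 := by positivity
  simp only [QQ]
  field_simp

theorem det_main (X : ℕ → ℝ) (hX : ∀ k, 0 ≤ X k)
    (hsum : Summable (fun k => X k / (k:ℝ)^2)) (β : ℝ)
    (hS : Tendsto (fun n : ℕ => (∑ i ∈ Finset.range n, X i) / n) atTop (𝓝 β)) :
    Tendsto (fun n : ℕ => (n:ℝ) * ∑' k : ℕ, (if n ≤ k then X k / (k:ℝ)^2 else 0))
      atTop (𝓝 β) := by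
  set S : ℕ → ℝ := fun m => ∑ i ∈ Finset.range m, X i with hSdef
  have hS0 : ∀ m, 0 ≤ S m := fun m => Finset.sum_nonneg (fun i _ => hX i)
  -- bound S m ≤ C * m
  obtain ⟨C, hC⟩ := hS.bddAbove_range
  rw [mem_upperBounds] at hC
  have hC' : ∀ m : ℕ, S m / m ≤ C := fun m => hC _ (Set.mem_range_self m)
  have hC0 : 0 ≤ C := le_trans (by simpa using hS0 1) (hC' 1)
  have hCS : ∀ m : ℕ, S m ≤ C * m := by
    intro m
    rcases Nat.eq_zero_or_pos m with h | h
    · simp [h, hSdef]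
    · have hm : (0:ℝ) < m := by exact_mod_cast h
      have := hC' m
      rw [div_le_iff₀ hm] at this
      linarith [this]
  -- summability of the G series
  have hGsum : ∀ n : ℕ, 1 ≤ n → Summable (fun j => if n ≤ j then cc j * S (j+1) else 0) := by
    intro n hn
    refine summable_ite_of_le n (summable_one_div_sq.mul_left (C*3)) (fun j hj => ?_) (fun j hj => ?_)
    · exact mul_nonneg (cc_nonneg (le_trans hn hj)) (hS0 _)
    · have h1 : cc j * S (j+1) ≤ cc j * (C * ((j:ℝ)+1)) := by
        refine mul_le_mul_of_nonneg_left ?_ (cc_nonneg (le_trans hn hj))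
        have := hCS (j+1); push_cast at this ⊢; linarith
      have h2 : cc j * (C * ((j:ℝ)+1)) = C * (cc j * ((j:ℝ)+1)) := by ring
      have h3 : C * (cc j * ((j:ℝ)+1)) ≤ C * (3/(j:ℝ)^2) :=
        mul_le_mul_of_nonneg_left (cc_mul_le (le_trans hn hj)) hC0
      calc cc j * S (j+1) ≤ C * (cc j * ((j:ℝ)+1)) := by linarith
      _ ≤ C * (3/(j:ℝ)^2) := h3
      _ = C * 3 * (1/(j:ℝ)^2) := by ring
  have husum : ∀ n : ℕ, 1 ≤ n → Summable (fun j => if n ≤ j then cc j * ((j:ℝ)+1) else 0) := by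
    intro n hn
    exact (hasSum_QQ n hn).summable
  -- finite Abel identity
  have hfin : ∀ n : ℕ, 1 ≤ n → ∀ N, n ≤ N →
      ∑ k ∈ Finset.Ico n N, X k/(k:ℝ)^2
        = (∑ j ∈ Finset.Ico n N, cc j * S (j+1)) + S N/(N:ℝ)^2 - S n/(n:ℝ)^2 := by
    intro n hn N hN
    induction N, hN using Nat.le_induction with
    | base => simp
    | succ N hN ih =>
      rw [Finset.sum_Ico_succ_top hN, Finset.sum_Ico_succ_top hN, ih]
      have hS1 : S (N+1) = S N + X N := Finset.sum_range_succ X N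
      have hNpos : (1:ℝ) ≤ (N:ℝ) := by exact_mod_cast le_trans hn hN
      have h0 : (N:ℝ) ≠ 0 := by linarith
      have h1 : (N:ℝ)+1 ≠ 0 := by linarith
      have : cc N * S (N+1) + S (N+1)/((N:ℝ)+1)^2 - S N/(N:ℝ)^2 = X N/(N:ℝ)^2 := by
        rw [hS1]
        simp only [cc]
        field_simp
        ring
      push_cast at this ⊢
      linarith [this]
  -- tsum identity
  have hTid : ∀ n : ℕ, 1 ≤ n →
      (∑' k : ℕ, if n ≤ k then X k/(k:ℝ)^2 else 0)
        = (∑' j : ℕ, if n ≤ j then cc j * S (j+1) else 0) - S n/(n:ℝ)^2 := by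
    intro n hn
    have hg : Summable (fun k => if n ≤ k then X k/(k:ℝ)^2 else 0) :=
      summable_ite_of_le n hsum (fun j hj => div_nonneg (hX j) (by positivity)) (fun j hj => le_rfl)
    have hlim1 : Tendsto (fun N => ∑ k ∈ Finset.range N, (if n ≤ k then X k/(k:ℝ)^2 else 0))
        atTop (𝓝 (∑' k : ℕ, if n ≤ k then X k/(k:ℝ)^2 else 0)) :=
      hg.hasSum.tendsto_sum_nat
    have hlim2 : Tendsto (fun N => ∑ k ∈ Finset.range N, (if n ≤ k then X k/(k:ℝ)^2 else 0))
        atTop (𝓝 ((∑' j : ℕ, if n ≤ j then cc j * S (j+1) else 0) - S n/(n:ℝ)^2)) := by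
      have hG : Tendsto (fun N => ∑ j ∈ Finset.range N, (if n ≤ j then cc j * S (j+1) else 0))
          atTop (𝓝 (∑' j : ℕ, if n ≤ j then cc j * S (j+1) else 0)) :=
        (hGsum n hn).hasSum.tendsto_sum_nat
      have hSN : Tendsto (fun N : ℕ => S N/(N:ℝ)^2) atTop (𝓝 0) := by
        have h2 : Tendsto (fun N : ℕ => (S N/(N:ℝ)) * (1/(N:ℝ))) atTop (𝓝 (β * 0)) :=
          hS.mul (by simpa using tendsto_one_div_atTop_nhds_zero_nat (𝕜 := ℝ))
        rw [mul_zero] at h2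
        refine h2.congr' ?_
        filter_upwards [eventually_ge_atTop 1] with N hN
        rw [div_mul_div_comm, mul_one, sq]
      have := (hG.add hSN).sub_const (S n/(n:ℝ)^2)
      rw [add_zero] at this
      refine this.congr' ?_
      filter_upwards [eventually_ge_atTop n] with N hN
      rw [sum_range_ite _ n hN, sum_range_ite _ n hN, hfin n hn N hN]
    exact tendsto_nhds_unique hlim1 hlim2
  -- epsilon argument
  rw [Metric.tendsto_atTop]
  intro ε hε
  set ε' : ℝ := ε/6 with hε'def
  have hε' : 0 < ε' := by positivity
  obtain ⟨N₁, hN₁⟩ := (Metric.tendsto_atTop.mp hS) ε' hε'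
  have hmin : 0 < min 1 (ε'/(|β|+1)) := by positivity
  obtain ⟨N₂, hN₂⟩ := (Metric.tendsto_atTop.mp tendsto_nQQ) _ hmin
  refine ⟨max (max N₁ N₂) 1, fun n hn => ?_⟩
  have hn1 : 1 ≤ n := le_trans (le_max_right _ _) hn
  have hnN₁ : N₁ ≤ n := le_trans (le_trans (le_max_left _ _) (le_max_left _ _)) hn
  have hnN₂ : N₂ ≤ n := le_trans (le_trans (le_max_right _ _) (le_max_left _ _)) hn
  have hnR : (1:ℝ) ≤ (n:ℝ) := by exact_mod_cast hn1
  -- bounds on tsum G n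
  have hup : (∑' j : ℕ, if n ≤ j then cc j * S (j+1) else 0)
      ≤ (β + ε') * QQ n := by
    have heq : (fun j : ℕ => (β + ε') * (if n ≤ j then cc j * ((j:ℝ)+1) else 0))
        = fun j : ℕ => if n ≤ j then (β + ε') * (cc j * ((j:ℝ)+1)) else 0 := by
      funext j; by_cases h : n ≤ j <;> simp [h, mul_ite, mul_zero]
    have h2 : (∑' j : ℕ, if n ≤ j then (β + ε') * (cc j * ((j:ℝ)+1)) else 0)
        = (β + ε') * QQ n := by
      rw [← heq, tsum_mul_left, (hasSum_QQ n hn1).tsum_eq]; rfl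
    rw [← h2]
    refine Summable.tsum_le_tsum (fun j => ?_) (hGsum n hn1) (by rw [← heq]; exact (husum n hn1).mul_left _)
    by_cases h : n ≤ j
    · simp only [if_pos h]
      have hdist := hN₁ (j+1) (le_trans hnN₁ (le_trans h (Nat.le_succ j)))
      rw [Real.dist_eq, abs_lt] at hdist
      have hd : S (j+1) ≤ (β + ε') * ((j:ℝ)+1) := by
        have hjpos : (0:ℝ) < (j:ℝ)+1 := by positivity
        have h3 : S (j+1) / ((j:ℝ)+1) - β < ε' := by
          have h4 := hdist.2
          push_cast at h4
          exact h4
        have h4 : S (j+1) / ((j:ℝ)+1) < β + ε' := by linarith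
        have h5 := (div_lt_iff₀ hjpos).mp h4
        linarith
      calc cc j * S (j+1) ≤ cc j * ((β + ε') * ((j:ℝ)+1)) :=
            mul_le_mul_of_nonneg_left hd (cc_nonneg (le_trans hn1 h))
      _ = (β + ε') * (cc j * ((j:ℝ)+1)) := by ring
    · simp [h]
  have hlo : (β - ε') * QQ n ≤ (∑' j : ℕ, if n ≤ j then cc j * S (j+1) else 0) := by
    have heq : (fun j : ℕ => (β - ε') * (if n ≤ j then cc j * ((j:ℝ)+1) else 0))
        = fun j : ℕ => if n ≤ j then (β - ε') * (cc j * ((j:ℝ)+1)) else 0 := by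
      funext j; by_cases h : n ≤ j <;> simp [h, mul_ite, mul_zero]
    have h2 : (∑' j : ℕ, if n ≤ j then (β - ε') * (cc j * ((j:ℝ)+1)) else 0)
        = (β - ε') * QQ n := by
      rw [← heq, tsum_mul_left, (hasSum_QQ n hn1).tsum_eq]; rfl
    rw [← h2]
    refine Summable.tsum_le_tsum (fun j => ?_) (by rw [← heq]; exact (husum n hn1).mul_left _) (hGsum n hn1)
    by_cases h : n ≤ j
    · simp only [if_pos h]
      have hdist := hN₁ (j+1) (le_trans hnN₁ (le_trans h (Nat.le_succ j)))
      rw [Real.dist_eq, abs_lt] at hdist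
      have hjpos : (0:ℝ) < (j:ℝ)+1 := by positivity
      have hd : (β - ε') * ((j:ℝ)+1) ≤ S (j+1) := by
        have h3 : -ε' < S (j+1) / ((j:ℝ)+1) - β := by
          have h4 := hdist.1
          push_cast at h4
          exact h4
        have h4 : β - ε' < S (j+1) / ((j:ℝ)+1) := by linarith
        have h5 := (lt_div_iff₀ hjpos).mp h4
        linarith
      calc (β - ε') * (cc j * ((j:ℝ)+1)) = cc j * ((β - ε') * ((j:ℝ)+1)) := by ring
      _ ≤ cc j * S (j+1) := mul_le_mul_of_nonneg_left hd (cc_nonneg (le_trans hn1 h))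
    · simp [h]
  -- put everything together
  set Gt := (∑' j : ℕ, if n ≤ j then cc j * S (j+1) else 0) with hGt
  set q := (n:ℝ) * QQ n with hq
  set D := (n:ℝ) * Gt with hD
  have hQ2 : |q - 2| < min 1 (ε'/(|β|+1)) := by
    have := hN₂ n hnN₂
    rwa [Real.dist_eq] at this
  have hq3 : q ≤ 3 := by
    have h1 := (abs_lt.mp hQ2).2
    have h2 := min_le_left (1:ℝ) (ε'/(|β|+1))
    linarith
  have hnn : (0:ℝ) ≤ (n:ℝ) := by positivity
  have habs1 : |D - β * q| ≤ ε' * q := by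
    have h1 : D ≤ (β + ε') * q := by
      have := mul_le_mul_of_nonneg_left hup hnn
      calc D ≤ (n:ℝ) * ((β + ε') * QQ n) := this
      _ = (β + ε') * q := by rw [hq]; ring
    have h2 : (β - ε') * q ≤ D := by
      have := mul_le_mul_of_nonneg_left hlo hnn
      calc (β - ε') * q = (n:ℝ) * ((β - ε') * QQ n) := by rw [hq]; ring
      _ ≤ D := this
    have e1 : (β + ε') * q = β * q + ε' * q := by ring
    have e2 : (β - ε') * q = β * q - ε' * q := by ring
    rw [abs_le]
    constructor <;> linarith
  have hq0 : 0 ≤ q := by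
    have h1 := (abs_lt.mp hQ2).1
    have h2 := min_le_left (1:ℝ) (ε'/(|β|+1))
    linarith
  have habs2 : |β * q - 2 * β| ≤ ε' := by
    have e : |β * q - 2 * β| = |β| * |q - 2| := by
      rw [← abs_mul]; ring_nf
    have hb1 : |q - 2| ≤ ε'/(|β|+1) := le_of_lt (lt_of_lt_of_le hQ2 (min_le_right _ _))
    have hb2 : |β| * |q - 2| ≤ |β| * (ε'/(|β|+1)) :=
      mul_le_mul_of_nonneg_left hb1 (abs_nonneg β)
    have hbp : (0:ℝ) < |β| + 1 := by positivity
    have hb3 : |β| * (ε'/(|β|+1)) ≤ ε' := by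
      rw [mul_div_assoc', div_le_iff₀ hbp]
      nlinarith [abs_nonneg β, hε'.le]
    rw [e]; linarith
  have habs3 : |S n/(n:ℝ) - β| ≤ ε' := by
    have := hN₁ n hnN₁
    rw [Real.dist_eq] at this
    exact le_of_lt this
  have hfn : (n:ℝ) * (∑' k : ℕ, if n ≤ k then X k/(k:ℝ)^2 else 0) = D - S n/(n:ℝ) := by
    rw [hTid n hn1, hD]
    have h0 : (n:ℝ) ≠ 0 := by positivity
    field_simp
    ring
  rw [Real.dist_eq]
  have key : (n:ℝ) * (∑' k : ℕ, if n ≤ k then X k/(k:ℝ)^2 else 0) - β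
      = (D - β * q) + (β * q - 2 * β) + (β - S n/(n:ℝ)) := by
    rw [hfn]; ring
  have htri : |(D - β * q) + (β * q - 2 * β) + (β - S n/(n:ℝ))|
      ≤ |D - β * q| + |β * q - 2 * β| + |β - S n/(n:ℝ)| :=
    le_trans (abs_add_le _ _) (by linarith [abs_add_le (D - β * q) (β * q - 2 * β)])
  have hβS : |β - S n/(n:ℝ)| ≤ ε' := by rwa [abs_sub_comm]
  have hq4 : ε' * q ≤ 3 * ε' := by nlinarith
  calc |(n:ℝ) * (∑' k : ℕ, if n ≤ k then X k/(k:ℝ)^2 else 0) - β|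
      = |(D - β * q) + (β * q - 2 * β) + (β - S n/(n:ℝ))| := by rw [key]
  _ ≤ |D - β * q| + |β * q - 2 * β| + |β - S n/(n:ℝ)| := htri
  _ ≤ ε' * q + ε' + ε' := by linarith
  _ ≤ 3 * ε' + ε' + ε' := by linarith
  _ < ε := by rw [hε'def]; linarith

theorem tail_iid_squares
    {Ω : Type*} {mΩ : MeasurableSpace Ω} (μ : Measure Ω) [IsProbabilityMeasure μ]
    (ρ : ℕ → Ω → ℝ)
    (hmeas : ∀ k, Measurable (ρ k))
    (hindep : iIndepFun ρ μ)
    (hident : ∀ k, IdentDistrib (ρ k) (ρ 1) μ μ)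
    (hL4 : Integrable (fun ω => (ρ 1 ω) ^ 4) μ)
    (β : ℝ) (hβ : β = ∫ ω, (ρ 1 ω) ^ 2 ∂μ) :
    ∀ᵐ ω ∂μ, Tendsto
      (fun n : ℕ => (n : ℝ) * ∑' k : ℕ, (if n ≤ k then (ρ k ω) ^ 2 / (k : ℝ) ^ 2 else 0))
      atTop (𝓝 β) := by
  set X : ℕ → Ω → ℝ := fun k ω => (ρ k ω) ^ 2 with hXdef
  have hXmeas : ∀ k, Measurable (X k) := fun k => (hmeas k).pow_const 2
  have hsq : Measurable (fun x : ℝ => x ^ 2) := measurable_id.pow_const 2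
  have hXid1 : ∀ k, IdentDistrib (X k) (X 1) μ μ := fun k => (hident k).comp hsq
  have hXident : ∀ k, IdentDistrib (X k) (X 0) μ μ :=
    fun k => (hXid1 k).trans (hXid1 0).symm
  have hX1int : Integrable (X 1) μ := by
    refine Integrable.mono' ((integrable_const (1:ℝ)).add hL4)
      (hXmeas 1).aestronglyMeasurable ?_
    filter_upwards with ω
    have : |ρ 1 ω ^ 2| = ρ 1 ω ^ 2 := abs_of_nonneg (sq_nonneg _)
    have h2 : ((fun _ : Ω => (1:ℝ)) + fun ω => ρ 1 ω ^ 4) ω = 1 + ρ 1 ω ^ 4 := rfl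
    simp only [hXdef, h2]
    rw [Real.norm_eq_abs, this]
    nlinarith [sq_nonneg (ρ 1 ω ^ 2 - 1)]
  have hXint : Integrable (X 0) μ := (hXid1 0).integrable_iff.mpr hX1int
  have hpair : Pairwise (Function.onFun (IndepFun · · μ) X) := by
    intro i j hij
    exact (hindep.comp (fun _ => fun x : ℝ => x ^ 2) (fun _ => hsq)).indepFun hij
  have hSLLN := strong_law_ae_real X hXint hpair hXident
  have hint0 : (∫ ω, X 0 ω ∂μ) = β := by
    rw [hβ]; exact (hXid1 0).integral_eq
  rw [hint0] at hSLLN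
  -- a.e. summability
  have hsummable : ∀ᵐ ω ∂μ, Summable (fun k : ℕ => (ρ k ω) ^ 2 / (k:ℝ)^2) := by
    have hmeask : ∀ k : ℕ, Measurable (fun ω => ENNReal.ofReal (X k ω / (k:ℝ)^2)) :=
      fun k => ((hXmeas k).div_const _).ennreal_ofReal
    have hB : ∀ k : ℕ, (∫⁻ ω, ENNReal.ofReal (X k ω) ∂μ)
        = ∫⁻ ω, ENNReal.ofReal (X 1 ω) ∂μ := by
      intro k
      exact ((hXid1 k).comp ENNReal.measurable_ofReal).lintegral_eq
    have hBfin : (∫⁻ ω, ENNReal.ofReal (X 1 ω) ∂μ) ≠ ⊤ := by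
      have h1 := hX1int.2
      rw [hasFiniteIntegral_iff_norm] at h1
      refine ne_of_lt (lt_of_le_of_lt (lintegral_mono (fun ω => ?_)) h1)
      refine ENNReal.ofReal_le_ofReal ?_
      rw [Real.norm_eq_abs]
      exact le_abs_self _
    have hkey : (∑' k : ℕ, ∫⁻ ω, ENNReal.ofReal (X k ω / (k:ℝ)^2) ∂μ) ≠ ⊤ := by
      have hEq : ∀ k : ℕ, (∫⁻ ω, ENNReal.ofReal (X k ω / (k:ℝ)^2) ∂μ)
          = ENNReal.ofReal (1/(k:ℝ)^2) * ∫⁻ ω, ENNReal.ofReal (X 1 ω) ∂μ := by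
        intro k
        rw [← hB k, ← lintegral_const_mul _ ((hXmeas k).ennreal_ofReal)]
        congr 1
        funext ω
        rw [← ENNReal.ofReal_mul (by positivity)]
        congr 1
        field_simp
      calc (∑' k : ℕ, ∫⁻ ω, ENNReal.ofReal (X k ω / (k:ℝ)^2) ∂μ)
          = (∑' k : ℕ, ENNReal.ofReal (1/(k:ℝ)^2)) * ∫⁻ ω, ENNReal.ofReal (X 1 ω) ∂μ := by
            rw [← ENNReal.tsum_mul_right]; exact tsum_congr hEq
      _ = ENNReal.ofReal (∑' k : ℕ, 1/(k:ℝ)^2) * ∫⁻ ω, ENNReal.ofReal (X 1 ω) ∂μ := by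
            rw [ENNReal.ofReal_tsum_of_nonneg (fun k => by positivity) summable_one_div_sq]
      _ ≠ ⊤ := ENNReal.mul_ne_top ENNReal.ofReal_ne_top hBfin
    have hae : ∀ᵐ ω ∂μ, (∑' k : ℕ, ENNReal.ofReal (X k ω / (k:ℝ)^2)) < ⊤ := by
      refine ae_lt_top (by measurability) ?_
      rw [lintegral_tsum (fun k => (hmeask k).aemeasurable)]
      exact hkey
    filter_upwards [hae] with ω hω
    have h1 : Summable (fun k : ℕ => ((X k ω / (k:ℝ)^2).toNNReal : ℝ)) := by
      rw [← ENNReal.tsum_coe_ne_top_iff_summable_coe]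
      exact ne_of_lt hω
    refine h1.congr (fun k => ?_)
    rw [Real.coe_toNNReal _ (by positivity)]
  filter_upwards [hSLLN, hsummable] with ω h1 h2
  exact det_main (fun k => (ρ k ω) ^ 2) (fun k => sq_nonneg _) h2 β h1
end

section
/- Let (X_n) be a generalized Ottawa sequence with predictive means V_n^f = ∑_{i=1}^n p_{n,i} f(X_i) + r_n E[f(X_1)], where for each n the coefficients satisfy p_{n+1,i} = (r_{n+1}/r_n)·p_{n,i} for i ≤ n and p_{n+1,n+1} = 1 − r_{n+1}/r_n. Then for every bounded measurable f, the sequence (V_n^f)_{n≥0} is a martingale with respect to the filtration 𝒢_n = ℱ_n^X ∨ ℱ_∞^Y; consequently (X_n) is conditionally identically distributed with respect to 𝒢. -/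
open Filter Topology MeasureTheory ProbabilityTheory Finset

/-- For a generalized Ottawa sequence, the predictive means `V_n^f` form a
`𝒢`-martingale and consequently the sequence is conditionally identically
distributed with respect to `𝒢`. -/
theorem gos_predictive_mean_martingale_and_cid
    {Ω : Type*} {m : MeasurableSpace Ω} (μ : Measure Ω) [IsProbabilityMeasure μ]
    {E : Type*} [MeasurableSpace E]
    (𝒢 : Filtration ℕ m)
    (X : ℕ → Ω → E) (r : ℕ → Ω → ℝ) (p : ℕ → ℕ → Ω → ℝ)
    -- adaptedness of the observations
    (hX : ∀ i n, 1 ≤ i → i ≤ n → Measurable[𝒢 n] (X i))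
    -- the coefficients are `𝒢_0`-measurable (they are functions of the `Y`'s)
    (hrmeas : ∀ n, StronglyMeasurable[𝒢 0] (r n))
    (hpmeas : ∀ n i, StronglyMeasurable[𝒢 0] (p n i))
    -- `r_0 = 1`, positivity and monotonicity of the weights
    (hr0 : ∀ ω, r 0 ω = 1)
    (hrpos : ∀ n, ∀ᵐ ω ∂μ, 0 < r n ω)
    (hrdec : ∀ n, ∀ᵐ ω ∂μ, r (n + 1) ω ≤ r n ω)
    -- recursion of the coefficients
    (hprec : ∀ n i, 1 ≤ i → i ≤ n →
      ∀ᵐ ω ∂μ, p (n + 1) i ω = (r (n + 1) ω / r n ω) * p n i ω)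
    (hpdiag : ∀ n, ∀ᵐ ω ∂μ, p (n + 1) (n + 1) ω = 1 - r (n + 1) ω / r n ω)
    -- the prediction rule: `V_n^f` is a version of `E[f(X_{n+1}) | 𝒢_n]`
    (hpred : ∀ (f : E → ℝ), Measurable f → (∃ C, ∀ x, |f x| ≤ C) → ∀ n,
      μ[(fun ω => f (X (n + 1) ω)) | 𝒢 n]
        =ᵐ[μ] fun ω =>
          (∑ i ∈ Finset.Icc 1 n, p n i ω * f (X i ω)) + r n ω * ∫ ω', f (X 1 ω') ∂μ) :
    ∀ (f : E → ℝ), Measurable f → (∃ C, ∀ x, |f x| ≤ C) →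
      (Martingale
        (fun n ω =>
          (∑ i ∈ Finset.Icc 1 n, p n i ω * f (X i ω)) + r n ω * ∫ ω', f (X 1 ω') ∂μ)
        𝒢 μ) ∧
      (∀ n j, 1 ≤ j →
        μ[(fun ω => f (X (n + j) ω)) | 𝒢 n] =ᵐ[μ] μ[(fun ω => f (X (n + 1) ω)) | 𝒢 n]) := by
  intro f hfmeas hfbdd
  obtain ⟨C, hC⟩ := hfbdd
  have hΩ : Nonempty Ω := by
    by_contra h
    rw [not_nonempty_iff] at h
    have h1 : μ Set.univ = 1 := measure_univ
    rw [Set.eq_empty_of_isEmpty (Set.univ : Set Ω), measure_empty] at h1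
    exact zero_ne_one h1
  have hC0 : 0 ≤ C := le_trans (abs_nonneg _) (hC (X 1 (Classical.arbitrary Ω)))
  set c : ℝ := ∫ ω', f (X 1 ω') ∂μ with hc_def
  set V : ℕ → Ω → ℝ := fun n ω =>
    (∑ i ∈ Finset.Icc 1 n, p n i ω * f (X i ω)) + r n ω * c with hV_def
  -- bound on the constant c
  have hcbd : |c| ≤ C := by
    have := norm_integral_le_of_norm_le_const (μ := μ)
      (f := fun ω' => f (X 1 ω')) (C := C)
      (Filter.Eventually.of_forall fun ω' => by
        rw [Real.norm_eq_abs]; exact hC _)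
    simpa [measure_univ] using this
  -- r is bounded by 1
  have hr1 : ∀ n, ∀ᵐ ω ∂μ, r n ω ≤ 1 := by
    intro n
    induction n with
    | zero => filter_upwards with ω using le_of_eq (hr0 ω)
    | succ k ih => filter_upwards [ih, hrdec k] with ω h1 h2 using le_trans h2 h1
  -- a.e. version of the coefficient recursion, for all i at once
  have hprec' : ∀ n, ∀ᵐ ω ∂μ, ∀ i, 1 ≤ i → i ≤ n →
      p (n + 1) i ω = (r (n + 1) ω / r n ω) * p n i ω := by
    intro n
    rw [ae_all_iff]
    intro i
    by_cases h1 : 1 ≤ i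
    · by_cases h2 : i ≤ n
      · filter_upwards [hprec n i h1 h2] with ω h using fun _ _ => h
      · filter_upwards with ω using fun _ hh => absurd hh h2
    · filter_upwards with ω using fun hh _ => absurd hh h1
  -- the coefficients are in [0,1]
  have hp01 : ∀ n, ∀ᵐ ω ∂μ, ∀ i, 1 ≤ i → i ≤ n →
      0 ≤ p n i ω ∧ p n i ω ≤ 1 := by
    intro n
    induction n with
    | zero => filter_upwards with ω i h1 h2; omega
    | succ k ih =>
      filter_upwards [ih, hpdiag k, hrpos k, hrpos (k + 1), hrdec k, hprec' k]
        with ω hih hdiag hk hk1 hdec hrec i hi1 hi2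
      have hA0 : 0 < r (k + 1) ω / r k ω := div_pos hk1 hk
      have hA1 : r (k + 1) ω / r k ω ≤ 1 := (div_le_one hk).2 hdec
      rcases Nat.lt_or_ge i (k + 1) with h | h
      · have h2 : i ≤ k := by omega
        rw [hrec i hi1 h2]
        obtain ⟨hp0, hp1⟩ := hih i hi1 h2
        exact ⟨mul_nonneg hA0.le hp0, by nlinarith⟩
      · have : i = k + 1 := by omega
        subst this
        rw [hdiag]
        constructor <;> linarith
  -- measurability of V n
  have hVmeas : ∀ n, StronglyMeasurable[𝒢 n] (V n) := by
    intro n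
    apply StronglyMeasurable.add
    · apply Finset.stronglyMeasurable_fun_sum
      intro i hi
      rw [Finset.mem_Icc] at hi
      exact ((hpmeas n i).mono (𝒢.mono (Nat.zero_le n))).mul
        (hfmeas.comp (hX i n hi.1 hi.2)).stronglyMeasurable
    · exact ((hrmeas n).mono (𝒢.mono (Nat.zero_le n))).mul stronglyMeasurable_const
  -- a.e. bound on V n
  have hVbd : ∀ n, ∀ᵐ ω ∂μ, |V n ω| ≤ n * C + C := by
    intro n
    filter_upwards [hp01 n, hr1 n, hrpos n] with ω hp hr hr'
    have hsum : |∑ i ∈ Finset.Icc 1 n, p n i ω * f (X i ω)| ≤ n * C := by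
      calc |∑ i ∈ Finset.Icc 1 n, p n i ω * f (X i ω)|
          ≤ ∑ i ∈ Finset.Icc 1 n, |p n i ω * f (X i ω)| :=
            Finset.abs_sum_le_sum_abs _ _
        _ ≤ ∑ _i ∈ Finset.Icc 1 n, C := by
            apply Finset.sum_le_sum
            intro i hi
            rw [Finset.mem_Icc] at hi
            obtain ⟨hp0, hp1⟩ := hp i hi.1 hi.2
            rw [abs_mul]
            calc |p n i ω| * |f (X i ω)| ≤ 1 * C := by
                  apply mul_le_mul _ (hC _) (abs_nonneg _) zero_le_one
                  rw [abs_le]; exact ⟨by linarith, hp1⟩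
              _ = C := one_mul C
        _ = n * C := by
            rw [Finset.sum_const, Nat.card_Icc]
            simp [nsmul_eq_mul]
    have hrc : |r n ω * c| ≤ C := by
      rw [abs_mul]
      calc |r n ω| * |c| ≤ 1 * C :=
            mul_le_mul (by rw [abs_le]; exact ⟨by linarith, hr⟩) hcbd (abs_nonneg _)
              zero_le_one
        _ = C := one_mul C
    calc |V n ω| ≤ |∑ i ∈ Finset.Icc 1 n, p n i ω * f (X i ω)| + |r n ω * c| :=
          abs_add_le _ _
      _ ≤ n * C + C := add_le_add hsum hrc
  -- integrability of V n
  have hVint : ∀ n, Integrable (V n) μ := by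
    intro n
    refine Integrable.mono' (integrable_const ((n : ℝ) * C + C))
      ((hVmeas n).mono (𝒢.le n)).aestronglyMeasurable ?_
    filter_upwards [hVbd n] with ω h using by rwa [Real.norm_eq_abs]
  -- integrability of f ∘ X i for 1 ≤ i
  have hgint : ∀ i, 1 ≤ i → Integrable (fun ω => f (X i ω)) μ := by
    intro i hi
    refine Integrable.mono' (integrable_const C)
      ((hfmeas.comp ((hX i i hi le_rfl).mono (𝒢.le i) le_rfl)).aestronglyMeasurable) ?_
    filter_upwards with ω using by rw [Real.norm_eq_abs]; exact hC _
  -- the key one-step martingale property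
  have hstep : ∀ n, V n =ᵐ[μ] μ[V (n + 1) | 𝒢 n] := by
    intro n
    set A : Ω → ℝ := fun ω => r (n + 1) ω / r n ω with hA_def
    set S : Ω → ℝ := fun ω => ∑ i ∈ Finset.Icc 1 n, p n i ω * f (X i ω) with hS_def
    set g : Ω → ℝ := fun ω => f (X (n + 1) ω) with hg_def
    -- decomposition of V (n+1)
    have hdecomp : V (n + 1) =ᵐ[μ]
        (fun ω => A ω * S ω + (1 - A ω) * g ω) + fun ω => r (n + 1) ω * c := by
      filter_upwards [hprec' n, hpdiag n] with ω hrec hdiag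
      have hins : Finset.Icc 1 (n + 1) = insert (n + 1) (Finset.Icc 1 n) :=
        (Finset.insert_Icc_right_eq_Icc_add_one (by omega)).symm
      have hnm : (n + 1) ∉ Finset.Icc 1 n := by
        rw [Finset.mem_Icc]; omega
      have hsum : ∑ i ∈ Finset.Icc 1 n, p (n + 1) i ω * f (X i ω) = A ω * S ω := by
        rw [hS_def, Finset.mul_sum]
        apply Finset.sum_congr rfl
        intro i hi
        rw [Finset.mem_Icc] at hi
        rw [hrec i hi.1 hi.2]; ring
      show (∑ i ∈ Finset.Icc 1 (n + 1), p (n + 1) i ω * f (X i ω)) + r (n + 1) ω * c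
          = A ω * S ω + (1 - A ω) * g ω + r (n + 1) ω * c
      rw [hins, Finset.sum_insert hnm, hsum, hdiag]
      ring
    -- measurability and integrability of the pieces
    have hAmeas : StronglyMeasurable[𝒢 n] A :=
      (((hrmeas (n + 1)).mono (𝒢.mono (Nat.zero_le n))).measurable.div
        ((hrmeas n).mono (𝒢.mono (Nat.zero_le n))).measurable).stronglyMeasurable
    have hSmeas : StronglyMeasurable[𝒢 n] S := by
      apply Finset.stronglyMeasurable_fun_sum
      intro i hi
      rw [Finset.mem_Icc] at hi
      exact ((hpmeas n i).mono (𝒢.mono (Nat.zero_le n))).mul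
        (hfmeas.comp (hX i n hi.1 hi.2)).stronglyMeasurable
    have hA01 : ∀ᵐ ω ∂μ, 0 < A ω ∧ A ω ≤ 1 := by
      filter_upwards [hrpos n, hrpos (n + 1), hrdec n] with ω h1 h2 h3
      exact ⟨div_pos h2 h1, (div_le_one h1).2 h3⟩
    have hSbd : ∀ᵐ ω ∂μ, |S ω| ≤ n * C := by
      filter_upwards [hp01 n] with ω hp
      calc |S ω| ≤ ∑ i ∈ Finset.Icc 1 n, |p n i ω * f (X i ω)| :=
            Finset.abs_sum_le_sum_abs _ _
        _ ≤ ∑ _i ∈ Finset.Icc 1 n, C := by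
            apply Finset.sum_le_sum
            intro i hi
            rw [Finset.mem_Icc] at hi
            obtain ⟨hp0, hp1⟩ := hp i hi.1 hi.2
            rw [abs_mul]
            calc |p n i ω| * |f (X i ω)| ≤ 1 * C :=
                  mul_le_mul (by rw [abs_le]; exact ⟨by linarith, hp1⟩) (hC _)
                    (abs_nonneg _) zero_le_one
              _ = C := one_mul C
        _ = n * C := by rw [Finset.sum_const, Nat.card_Icc]; simp [nsmul_eq_mul]
    have hASint : Integrable (fun ω => A ω * S ω) μ := by
      refine Integrable.mono' (integrable_const ((n : ℝ) * C))
        ((hAmeas.mul hSmeas).mono (𝒢.le n)).aestronglyMeasurable ?_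
      filter_upwards [hA01, hSbd] with ω hA hS
      rw [Real.norm_eq_abs, abs_mul]
      calc |A ω| * |S ω| ≤ 1 * (n * C) :=
            mul_le_mul (by rw [abs_le]; constructor <;> linarith [hA.1, hA.2])
              hS (abs_nonneg _) zero_le_one
        _ = n * C := one_mul _
    have hgint' : Integrable g μ := hgint (n + 1) (by omega)
    have hBgint : Integrable ((fun ω => 1 - A ω) * g) μ := by
      refine Integrable.mono' (integrable_const C)
        ((stronglyMeasurable_const.sub (hAmeas.mono (𝒢.le n))).mul
          (hfmeas.comp ((hX (n + 1) (n + 1) (by omega) le_rfl).mono (𝒢.le (n + 1)) le_rfl)).stronglyMeasurable).aestronglyMeasurable ?_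
      filter_upwards [hA01] with ω hA
      show ‖(1 - A ω) * g ω‖ ≤ C
      rw [Real.norm_eq_abs, abs_mul]
      calc |1 - A ω| * |g ω| ≤ 1 * C :=
            mul_le_mul (by rw [abs_le]; constructor <;> linarith [hA.1, hA.2])
              (hC _) (abs_nonneg _) zero_le_one
        _ = C := one_mul C
    have hrcint : Integrable (fun ω => r (n + 1) ω * c) μ := by
      refine Integrable.mono' (integrable_const C)
        ((((hrmeas (n + 1)).mono (𝒢.le 0)).mul stronglyMeasurable_const)).aestronglyMeasurable ?_
      filter_upwards [hrpos (n + 1), hr1 (n + 1)] with ω h1 h2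
      rw [Real.norm_eq_abs, abs_mul]
      calc |r (n + 1) ω| * |c| ≤ 1 * C :=
            mul_le_mul (by rw [abs_le]; exact ⟨by linarith, h2⟩) hcbd (abs_nonneg _)
              zero_le_one
        _ = C := one_mul C
    -- compute the conditional expectation of the decomposition
    have hABint : Integrable (fun ω => A ω * S ω + (1 - A ω) * g ω) μ :=
      hASint.add hBgint
    have hce1 : μ[fun ω => A ω * S ω | 𝒢 n] = fun ω => A ω * S ω :=
      condExp_of_stronglyMeasurable (𝒢.le n) (hAmeas.mul hSmeas) hASint
    have hce2 : μ[(fun ω => 1 - A ω) * g | 𝒢 n]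
        =ᵐ[μ] (fun ω => 1 - A ω) * μ[g | 𝒢 n] :=
      condExp_mul_of_stronglyMeasurable_left (stronglyMeasurable_const.sub hAmeas) hBgint hgint'
    have hce3 : μ[fun ω => r (n + 1) ω * c | 𝒢 n] = fun ω => r (n + 1) ω * c :=
      condExp_of_stronglyMeasurable (𝒢.le n)
        (((hrmeas (n + 1)).mono (𝒢.mono (Nat.zero_le n))).mul stronglyMeasurable_const)
        hrcint
    have hpredn : μ[g | 𝒢 n] =ᵐ[μ] V n := hpred f hfmeas ⟨C, hC⟩ n
    refine EventuallyEq.symm ?_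
    calc μ[V (n + 1) | 𝒢 n]
        =ᵐ[μ] μ[(fun ω => A ω * S ω + (1 - A ω) * g ω) + fun ω => r (n + 1) ω * c | 𝒢 n] :=
          condExp_congr_ae hdecomp
      _ =ᵐ[μ] μ[fun ω => A ω * S ω + (1 - A ω) * g ω | 𝒢 n]
              + μ[fun ω => r (n + 1) ω * c | 𝒢 n] :=
          condExp_add hABint hrcint _
      _ =ᵐ[μ] (μ[fun ω => A ω * S ω | 𝒢 n] + μ[(fun ω => 1 - A ω) * g | 𝒢 n])
              + μ[fun ω => r (n + 1) ω * c | 𝒢 n] := by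
          refine EventuallyEq.add ?_ EventuallyEq.rfl
          exact condExp_add hASint hBgint _
      _ =ᵐ[μ] V n := by
          rw [hce1, hce3]
          filter_upwards [hce2, hpredn, hrpos n, hrdec n] with ω h2 hpr hr hd
          have hAr : A ω * r n ω = r (n + 1) ω := div_mul_cancel₀ _ (ne_of_gt hr)
          have h2' : (μ[(fun ω => 1 - A ω) * g | 𝒢 n]) ω = (1 - A ω) * (μ[g | 𝒢 n]) ω := h2
          simp only [Pi.add_apply]
          rw [h2', hpr]
          show A ω * S ω + (1 - A ω) * (S ω + r n ω * c) + r (n + 1) ω * c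
              = S ω + r n ω * c
          linear_combination (-c) * hAr
  -- the martingale
  have hmart : Martingale V 𝒢 μ := martingale_nat hVmeas hVint hstep
  refine ⟨hmart, ?_⟩
  intro n j hj
  obtain ⟨k, rfl⟩ : ∃ k, j = k + 1 := ⟨j - 1, by omega⟩
  have hadd : n + (k + 1) = (n + k) + 1 := by omega
  have h1 : μ[(fun ω => f (X (n + (k + 1)) ω)) | 𝒢 n]
      =ᵐ[μ] μ[μ[(fun ω => f (X ((n + k) + 1) ω)) | 𝒢 (n + k)] | 𝒢 n] := by
    rw [hadd]
    exact (condExp_condExp_of_le (𝒢.mono (Nat.le_add_right n k)) (𝒢.le (n + k))).symm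
  have h2 : μ[μ[(fun ω => f (X ((n + k) + 1) ω)) | 𝒢 (n + k)] | 𝒢 n]
      =ᵐ[μ] μ[V (n + k) | 𝒢 n] :=
    condExp_congr_ae (hpred f hfmeas ⟨C, hC⟩ (n + k))
  have h3 : μ[V (n + k) | 𝒢 n] =ᵐ[μ] V n :=
    hmart.condExp_ae_eq (Nat.le_add_right n k)
  have h4 : μ[(fun ω => f (X (n + 1) ω)) | 𝒢 n] =ᵐ[μ] V n := hpred f hfmeas ⟨C, hC⟩ n
  exact ((h1.trans h2).trans h3).trans h4.symm
end

section
/- Let (Y_i)_{i≥1} be i.i.d. positive random variables with mean m > 0 and let r_n = θ/(θ + ∑_{i=1}^n Y_i) for θ > 0. Then (1/log n)·∑_{j=1}^n r_j → θ/m almost surely, and (1/log n)·∑_{j=1}^n r_j(1 − r_j) → θ/m almost surely. -/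
open Filter Topology MeasureTheory ProbabilityTheory Finset

private lemma sum_Icc_one_eq_range_succ (h : ℕ → ℝ) (h0 : h 0 = 0) (n : ℕ) :
    ∑ j ∈ Finset.Icc 1 n, h j = ∑ i ∈ Finset.range (n + 1), h i := by
  rw [Finset.range_eq_Ico, Finset.sum_eq_sum_Ico_succ_bot (Nat.succ_pos n), h0,
    ← Finset.Ico_add_one_right_eq_Icc]
  ring_nf
  rw [Nat.succ_eq_add_one, add_comm]

private lemma harmonic_div_log :
    Tendsto (fun n : ℕ => (∑ j ∈ Finset.Icc 1 n, ((j : ℝ)⁻¹)) / Real.log n)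
      atTop (𝓝 1) := by
  have hH : ∀ n : ℕ, ((harmonic n : ℚ) : ℝ) = ∑ j ∈ Finset.Icc 1 n, ((j : ℝ)⁻¹) := by
    intro n
    rw [harmonic_eq_sum_Icc]
    push_cast
    rfl
  have hlog : Tendsto (fun n : ℕ => Real.log n) atTop atTop :=
    Real.tendsto_log_atTop.comp tendsto_natCast_atTop_atTop
  have h1 : Tendsto (fun n : ℕ => (((harmonic n : ℚ) : ℝ) - Real.log n) / Real.log n)
      atTop (𝓝 0) := Real.tendsto_harmonic_sub_log.div_atTop hlog
  have h2 : Tendsto (fun n : ℕ =>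
      (((harmonic n : ℚ) : ℝ) - Real.log n) / Real.log n + 1) atTop (𝓝 1) := by
    simpa using h1.add tendsto_const_nhds
  apply h2.congr'
  filter_upwards [hlog.eventually_gt_atTop 0] with n hn
  rw [sub_div, div_self hn.ne', ← hH]
  ring

private lemma cesaro_log (f : ℕ → ℝ) (L : ℝ)
    (h : Tendsto (fun j : ℕ => (j : ℝ) * f j) atTop (𝓝 L)) :
    Tendsto (fun n : ℕ => (∑ j ∈ Finset.Icc 1 n, f j) / Real.log n) atTop (𝓝 L) := by
  set g : ℕ → ℝ := fun j => (j : ℝ)⁻¹ with hg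
  set e : ℕ → ℝ := fun j => ((j : ℝ) * f j - L) * (j : ℝ)⁻¹ with he
  have hg0 : g 0 = 0 := by simp [hg]
  have he0 : e 0 = 0 := by simp [he]
  have hgnn : 0 ≤ g := fun j => by positivity
  -- e is little-o of g
  have hlo : e =o[atTop] g := by
    have h0 : Tendsto (fun j : ℕ => (j : ℝ) * f j - L) atTop (𝓝 0) :=
      tendsto_sub_nhds_zero_iff.2 h
    have := ((Asymptotics.isLittleO_one_iff ℝ).2 h0).mul_isBigO
      (Asymptotics.isBigO_refl g atTop)
    simpa [he] using this
  -- the sum of g over range diverges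
  have hgd : Tendsto (fun n : ℕ => ∑ i ∈ Finset.range n, g i) atTop atTop := by
    rw [← tendsto_add_atTop_iff_nat 1]
    have : ∀ n : ℕ, ∑ i ∈ Finset.range (n + 1), g i
        = ∑ i ∈ Finset.range n, 1 / ((i : ℝ) + 1) := by
      intro n
      rw [Finset.sum_range_succ']
      simp [hg, one_div]
    simp only [this]
    exact Real.tendsto_sum_range_one_div_nat_succ_atTop
  have hsum := hlo.sum_range hgnn hgd
  -- pass to Icc sums
  have hE : ∀ n : ℕ, ∑ j ∈ Finset.Icc 1 n, e j = ∑ i ∈ Finset.range (n + 1), e i :=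
    sum_Icc_one_eq_range_succ e he0
  have hHsum : ∀ n : ℕ, ∑ j ∈ Finset.Icc 1 n, g j = ∑ i ∈ Finset.range (n + 1), g i :=
    sum_Icc_one_eq_range_succ g hg0
  have hlo2 : (fun n : ℕ => ∑ j ∈ Finset.Icc 1 n, e j)
      =o[atTop] fun n : ℕ => ∑ j ∈ Finset.Icc 1 n, g j := by
    simp only [hE, hHsum]
    exact hsum.comp_tendsto (tendsto_add_atTop_nat 1)
  have hEH : Tendsto (fun n : ℕ =>
      (∑ j ∈ Finset.Icc 1 n, e j) / ∑ j ∈ Finset.Icc 1 n, g j) atTop (𝓝 0) :=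
    hlo2.tendsto_div_nhds_zero
  -- H n ≥ 1 for n ≥ 1
  have hHpos : ∀ n : ℕ, 1 ≤ n → (0 : ℝ) < ∑ j ∈ Finset.Icc 1 n, g j := by
    intro n hn
    have : (1 : ℝ) ≤ ∑ j ∈ Finset.Icc 1 n, g j := by
      have h1 : (1 : ℕ) ∈ Finset.Icc 1 n := by simp [hn]
      calc (1 : ℝ) = g 1 := by simp [hg]
        _ ≤ ∑ j ∈ Finset.Icc 1 n, g j :=
          Finset.single_le_sum (fun j _ => hgnn j) h1
    linarith
  -- decomposition of the sum of f
  have hdecomp : ∀ᶠ n in atTop, ∑ j ∈ Finset.Icc 1 n, f j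
      = L * ∑ j ∈ Finset.Icc 1 n, g j + ∑ j ∈ Finset.Icc 1 n, e j := by
    filter_upwards [eventually_ge_atTop 1] with n _
    rw [Finset.mul_sum, ← Finset.sum_add_distrib]
    apply Finset.sum_congr rfl
    intro j hj
    have hj1 : 1 ≤ j := (Finset.mem_Icc.1 hj).1
    have hjne : (j : ℝ) ≠ 0 := Nat.cast_ne_zero.2 (by omega)
    simp only [hg, he]
    rw [sub_mul, mul_comm (j : ℝ) (f j), mul_assoc, mul_inv_cancel₀ hjne]
    ring
  -- ratio to H tends to L
  have hAH : Tendsto (fun n : ℕ =>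
      (∑ j ∈ Finset.Icc 1 n, f j) / ∑ j ∈ Finset.Icc 1 n, g j) atTop (𝓝 L) := by
    have h1 : Tendsto (fun n : ℕ =>
        L + (∑ j ∈ Finset.Icc 1 n, e j) / ∑ j ∈ Finset.Icc 1 n, g j)
        atTop (𝓝 L) := by simpa using tendsto_const_nhds.add hEH
    apply h1.congr'
    filter_upwards [hdecomp, eventually_ge_atTop 1] with n hd hn
    rw [hd, add_div, mul_div_assoc, div_self (hHpos n hn).ne', mul_one]
  -- combine with harmonic/log → 1
  have := hAH.mul harmonic_div_log
  rw [mul_one] at this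
  apply this.congr'
  filter_upwards [eventually_ge_atTop 1] with n hn
  exact div_mul_div_cancel₀ (hHpos n hn).ne'

theorem log_limits_randomly_reinforced
    {Ω : Type*} {mΩ : MeasurableSpace Ω} (μ : Measure Ω) [IsProbabilityMeasure μ]
    (Y : ℕ → Ω → ℝ) (θ m : ℝ) (hθ : 0 < θ) (hm : 0 < m)
    (hmeas : ∀ i, Measurable (Y i))
    (hindep : iIndepFun Y μ)
    (hident : ∀ i, IdentDistrib (Y i) (Y 1) μ μ)
    (hposY : ∀ i, ∀ᵐ ω ∂μ, 0 < Y i ω)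
    (hint : Integrable (Y 1) μ) (hmean : ∫ ω, Y 1 ω ∂μ = m)
    (r : ℕ → Ω → ℝ)
    (hr : ∀ n ω, r n ω = θ / (θ + ∑ i ∈ Finset.Icc 1 n, Y i ω)) :
    (∀ᵐ ω ∂μ, Tendsto (fun n : ℕ => (∑ j ∈ Finset.Icc 1 n, r j ω) / Real.log n)
      atTop (𝓝 (θ / m))) ∧
    (∀ᵐ ω ∂μ, Tendsto
      (fun n : ℕ => (∑ j ∈ Finset.Icc 1 n, r j ω * (1 - r j ω)) / Real.log n)
      atTop (𝓝 (θ / m))) := by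
  set X : ℕ → Ω → ℝ := fun i => Y (i + 1) with hX
  have hindep' : Pairwise (Function.onFun (IndepFun · · μ) X) := by
    intro i j hij
    exact hindep.indepFun (by omega)
  have hident' : ∀ i, IdentDistrib (X i) (X 0) μ μ := fun i => hident (i + 1)
  have hslln := ProbabilityTheory.strong_law_ae X hint hindep' hident'
  have hpos : ∀ᵐ ω ∂μ, ∀ i, 0 < Y i ω := ae_all_iff.2 hposY
  have key : ∀ᵐ ω ∂μ,
      Tendsto (fun j : ℕ => (j : ℝ) * r j ω) atTop (𝓝 (θ / m)) ∧
      Tendsto (fun j : ℕ => (j : ℝ) * (r j ω * (1 - r j ω))) atTop (𝓝 (θ / m)) := by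
    filter_upwards [hslln, hpos] with ω hωs hωp
    set S : ℕ → ℝ := fun n => ∑ i ∈ Finset.Icc 1 n, Y i ω with hSdef
    have hrange : ∀ n : ℕ, ∑ i ∈ Finset.range n, X i ω = S n := by
      intro n
      show ∑ i ∈ Finset.range n, X i ω = ∑ i ∈ Finset.Icc 1 n, Y i ω
      rw [← Finset.Ico_add_one_right_eq_Icc, Finset.sum_Ico_eq_sum_range]
      simp [hX, add_comm]
    have hS : Tendsto (fun n : ℕ => S n / n) atTop (𝓝 m) := by
      have : μ[X 0] = m := hmean
      rw [this] at hωs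
      apply hωs.congr
      intro n
      rw [hrange n, smul_eq_mul, inv_mul_eq_div]
    have hSnn : ∀ n, 0 ≤ S n := fun n =>
      Finset.sum_nonneg fun i _ => (hωp i).le
    have hden : ∀ n, (0 : ℝ) < θ + S n := fun n => by linarith [hSnn n]
    -- j * r j → θ/m
    have hjr : Tendsto (fun j : ℕ => (j : ℝ) * r j ω) atTop (𝓝 (θ / m)) := by
      have hlim : Tendsto (fun j : ℕ => θ / (θ / j + S j / j)) atTop (𝓝 (θ / m)) := by
        have hd : Tendsto (fun j : ℕ => θ / (j : ℝ) + S j / j) atTop (𝓝 m) := by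
          simpa using (tendsto_const_div_atTop_nhds_zero_nat θ).add hS
        exact tendsto_const_nhds.div hd hm.ne'
      apply hlim.congr'
      filter_upwards [eventually_ge_atTop 1] with j hj
      have hjne : (j : ℝ) ≠ 0 := Nat.cast_ne_zero.2 (by omega)
      rw [hr, ← add_div, div_div_eq_mul_div]
      ring
    have hr0 : Tendsto (fun j : ℕ => r j ω) atTop (𝓝 0) := by
      have hinv : Tendsto (fun j : ℕ => ((j : ℝ)⁻¹)) atTop (𝓝 0) :=
        tendsto_inv_atTop_zero.comp tendsto_natCast_atTop_atTop
      have := hjr.mul hinv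
      rw [mul_zero] at this
      apply this.congr'
      filter_upwards [eventually_ge_atTop 1] with j hj
      have hjne : (j : ℝ) ≠ 0 := Nat.cast_ne_zero.2 (by omega)
      rw [mul_comm ((j:ℝ)) (r j ω), mul_assoc, mul_inv_cancel₀ hjne, mul_one]
    refine ⟨hjr, ?_⟩
    have := hjr.mul ((tendsto_const_nhds (x := (1 : ℝ))).sub hr0)
    rw [sub_zero, mul_one] at this
    apply this.congr
    intro j
    ring
  constructor
  · filter_upwards [key] with ω hω
    exact cesaro_log (fun j => r j ω) (θ / m) hω.1
  · filter_upwards [key] with ω hω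
    exact cesaro_log (fun j => r j ω * (1 - r j ω)) (θ / m) hω.2
end

section
/- Let (X_n) be a sequence of random variables with values in a measurable space E, adapted to a filtration 𝒢 = (𝒢_n)_{n≥0}. Then (X_n) is conditionally identically distributed with respect to 𝒢 (i.e., E[f(X_{n+j}) | 𝒢_n] = E[f(X_{n+1}) | 𝒢_n] a.s. for all n ≥ 0, j ≥ 1 and bounded measurable f) if and only if for every bounded measurable f the sequence V_n^f := E[f(X_{n+1}) | 𝒢_n] is a 𝒢-martingale. -/
open Filter Topology MeasureTheory Finset

/-- A `𝒢`-adapted sequence is conditionally identically distributed with respect to `𝒢`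
if and only if, for every bounded measurable `f`, the predictive means
`V_n^f = E[f(X_{n+1}) | 𝒢_n]` form a `𝒢`-martingale. -/
theorem cid_iff_predictive_mean_martingale
    {Ω : Type*} {m : MeasurableSpace Ω} (μ : Measure Ω) [IsProbabilityMeasure μ]
    {E : Type*} [MeasurableSpace E]
    (𝒢 : Filtration ℕ m) (X : ℕ → Ω → E)
    (hX : ∀ n, Measurable[𝒢 n] (X n)) :
    (∀ (f : E → ℝ), Measurable f → (∃ C, ∀ x, |f x| ≤ C) →
        ∀ (n j : ℕ), 1 ≤ j →
          μ[(fun ω => f (X (n + j) ω)) | 𝒢 n] =ᵐ[μ] μ[(fun ω => f (X (n + 1) ω)) | 𝒢 n])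
      ↔
    (∀ (f : E → ℝ), Measurable f → (∃ C, ∀ x, |f x| ≤ C) →
        Martingale (fun n => μ[(fun ω => f (X (n + 1) ω)) | 𝒢 n]) 𝒢 μ) := by
  constructor
  · intro hcid f hf hbd
    refine ⟨fun n => stronglyMeasurable_condExp, fun i j hij => ?_⟩
    have h1 : μ[μ[(fun ω => f (X (j + 1) ω)) | 𝒢 j] | 𝒢 i]
        =ᵐ[μ] μ[(fun ω => f (X (j + 1) ω)) | 𝒢 i] :=
      condExp_condExp_of_le (𝒢.mono hij) (𝒢.le j)
    refine h1.trans ?_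
    have h2 := hcid f hf hbd i (j + 1 - i) (by omega)
    rwa [show i + (j + 1 - i) = j + 1 by omega] at h2
  · intro hmart f hf hbd n j hj
    have hmg := hmart f hf hbd
    have h1 : μ[(fun ω => f (X (n + j) ω)) | 𝒢 n] =ᵐ[μ]
        μ[μ[(fun ω => f (X (n + j) ω)) | 𝒢 (n + j - 1)] | 𝒢 n] :=
      (condExp_condExp_of_le (𝒢.mono (by omega)) (𝒢.le _)).symm
    refine h1.trans ?_
    have h2 := hmg.condExp_ae_eq (i := n) (j := n + j - 1) (by omega)
    rw [show n + j - 1 + 1 = n + j from by omega] at h2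
    exact h2
end
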